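/- For real numbers μ₀, μ₁ and v₀, v₁ > 0, the Kullback–Leibler divergence between the two Gaussian measures is klDiv (gaussianReal μ₀ v₀) (gaussianReal μ₁ v₁) = ENNReal.ofReal ( (μ₀ - μ₁)²/(2 v₁) + (1/2) · (v₀/v₁ - 1 - Real.log (v₀/v₁)) ). In particular, when v₀ = v₁ = v it equals ENNReal.ofReal ((μ₀ - μ₁)²/(2v)), so minimizing the KL divergence over μ₀ is equivalent to minimizing the squared distance of the means. -/

import Mathlib

open MeasureTheory ProbabilityTheory
open scoped Classical
open Real Filter Set
open scoped NNReal ENNReal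

section helpers


lemma rpow_two_eq (x : ℝ) : x ^ (2:ℝ) = x ^ 2 := by
  rw [show (2:ℝ) = ((2:ℕ):ℝ) by norm_num, Real.rpow_natCast]

lemma rpow_one_eq (x : ℝ) : x ^ (1:ℝ) = x := Real.rpow_one x

lemma integrable_sq_mul_exp_neg_mul_sq {b : ℝ} (hb : 0 < b) :
    Integrable fun x : ℝ => x ^ 2 * rexp (-b * x ^ 2) := by
  have h := integrable_rpow_mul_exp_neg_mul_sq hb (by norm_num : (-1 : ℝ) < 2)
  simp only [rpow_two_eq] at h
  exact h

lemma integrable_id_mul_exp_neg_mul_sq {b : ℝ} (hb : 0 < b) :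
    Integrable fun x : ℝ => x * rexp (-b * x ^ 2) := by
  have h := integrable_rpow_mul_exp_neg_mul_sq hb (by norm_num : (-1 : ℝ) < 1)
  simp only [rpow_one_eq] at h
  exact h

lemma integral_id_mul_exp_neg_mul_sq {b : ℝ} (hb : 0 < b) :
    ∫ x : ℝ, x * rexp (-b * x ^ 2) = 0 := by
  have h := integral_neg_eq_self (fun x : ℝ => x * rexp (-b * x ^ 2)) volume
  simp only [neg_sq, neg_mul] at h ⊢
  rw [integral_neg] at h
  linarith

lemma integral_sq_mul_exp_neg_mul_sq {b : ℝ} (hb : 0 < b) :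
    ∫ x : ℝ, x ^ 2 * rexp (-b * x ^ 2) = Real.sqrt (π / b) / (2 * b) := by
  have key : ∫ x in Ioi (0:ℝ), x ^ 2 * rexp (-b * x ^ 2)
      = Real.sqrt (π / b) / (4 * b) := by
    set f : ℝ → ℝ := fun x => -(x / (2 * b)) * rexp (-b * x ^ 2) with hf
    have hderiv : ∀ x : ℝ, HasDerivAt f
        (x ^ 2 * rexp (-b * x ^ 2) - (2 * b)⁻¹ * rexp (-b * x ^ 2)) x := by
      intro x
      have h1 : HasDerivAt (fun x : ℝ => -(x / (2 * b))) (-(2*b)⁻¹) x := by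
        simpa [div_eq_mul_inv, Pi.neg_def] using ((hasDerivAt_id x).div_const (2*b)).neg
      have h2 : HasDerivAt (fun x : ℝ => rexp (-b * x ^ 2)) (rexp (-b * x^2) * (-b * (2*x))) x := by
        have : HasDerivAt (fun x : ℝ => -b * x ^ 2) (-b * (2 * x)) x := by
          simpa using ((hasDerivAt_pow 2 x)).const_mul (-b)
        exact this.exp
      have := h1.mul h2
      refine this.congr_deriv ?_
      have hb' : (2*b) ≠ 0 := by positivity
      field_simp
      ring
    have htends : Tendsto f atTop (nhds 0) := by
      have ho := rpow_mul_exp_neg_mul_sq_isLittleO_exp_neg hb 1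
      have hhalf : Tendsto (fun x : ℝ => (1/2 : ℝ) * x) atTop atTop :=
        tendsto_id.const_mul_atTop (by norm_num)
      have h0 : Tendsto (fun x : ℝ => rexp (-((1/2:ℝ) * x))) atTop (nhds 0) :=
        Real.tendsto_exp_atBot.comp (tendsto_neg_atTop_atBot.comp hhalf)
      have h0' : Tendsto (fun x : ℝ => rexp (-(1/2:ℝ) * x)) atTop (nhds 0) := by
        simpa [neg_mul] using h0
      have hte := ho.isBigO.trans_tendsto h0'
      simp only [Real.rpow_one] at hte
      have h3 : Tendsto (fun x : ℝ => -(x * rexp (-b * x ^ 2) / (2*b))) atTop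
          (nhds (-(0 / (2*b)))) := (hte.div_const (2*b)).neg
      simp only [hf]
      convert h3 using 2 with x
      · ring
      · norm_num
    have hint : IntegrableOn
        (fun x : ℝ => x ^ 2 * rexp (-b * x ^ 2) - (2 * b)⁻¹ * rexp (-b * x ^ 2)) (Ioi 0) :=
      ((integrable_sq_mul_exp_neg_mul_sq hb).sub
        ((integrable_exp_neg_mul_sq hb).const_mul _)).integrableOn
    have heq := integral_Ioi_of_hasDerivAt_of_tendsto
      (Continuous.continuousWithinAt (by fun_prop)) (fun x _ => hderiv x) hint htends
    rw [integral_sub ((integrable_sq_mul_exp_neg_mul_sq hb).integrableOn)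
      (((integrable_exp_neg_mul_sq hb).const_mul _).integrableOn)] at heq
    rw [integral_const_mul, integral_gaussian_Ioi] at heq
    have hf0 : f 0 = 0 := by simp [hf]
    rw [hf0, sub_zero, sub_eq_zero] at heq
    rw [heq]
    field_simp
    norm_num
  have heven : ∫ x : ℝ, x ^ 2 * rexp (-b * x ^ 2)
      = 2 * ∫ x in Ioi (0:ℝ), x ^ 2 * rexp (-b * x ^ 2) := by
    rw [← integral_comp_abs (f := fun x : ℝ => x ^ 2 * rexp (-b * x ^ 2))]
    simp [sq_abs]
  rw [heven, key]
  ring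
section quadratic

variable {v : ℝ} (hv : 0 < v) (μ A B C : ℝ)

lemma gaussianPDFReal_eq (x : ℝ) :
    gaussianPDFReal μ ⟨v, hv.le⟩ x
      = (Real.sqrt (2 * π * v))⁻¹ * rexp (-(2*v)⁻¹ * (x - μ) ^ 2) := by
  simp only [gaussianPDFReal, NNReal.coe_mk]
  congr 1
  rw [neg_div, div_eq_inv_mul, neg_mul]
  rfl

lemma gaussian_quadratic_integrable :
    Integrable fun x : ℝ =>
      (A + B * (x - μ) + C * (x - μ) ^ 2) * gaussianPDFReal μ ⟨v, hv.le⟩ x := by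
  set b : ℝ := (2*v)⁻¹ with hbdef
  have hb : 0 < b := by positivity
  set Cst : ℝ := (Real.sqrt (2 * π * v))⁻¹ with hCdef
  have h1 := (integrable_exp_neg_mul_sq hb).const_mul (A * Cst)
  have h2 := (integrable_id_mul_exp_neg_mul_sq hb).const_mul (B * Cst)
  have h3 := (integrable_sq_mul_exp_neg_mul_sq hb).const_mul (C * Cst)
  have hG : Integrable (fun y : ℝ => (A + B * y + C * y ^ 2) * (Cst * rexp (-b * y ^ 2))) :=
    ((h1.add h2).add h3).congr (Filter.Eventually.of_forall fun y => by
      simp only [Pi.add_apply]; ring)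
  have := hG.comp_sub_right μ
  refine this.congr (Filter.Eventually.of_forall fun x => ?_)
  simp only [gaussianPDFReal_eq hv, ← hCdef, ← hbdef]

lemma gaussian_quadratic_integral :
    ∫ x : ℝ, (A + B * (x - μ) + C * (x - μ) ^ 2) * gaussianPDFReal μ ⟨v, hv.le⟩ x
      = A + C * v := by
  set b : ℝ := (2*v)⁻¹ with hbdef
  have hb : 0 < b := by positivity
  set Cst : ℝ := (Real.sqrt (2 * π * v))⁻¹ with hCdef
  have h1 := (integrable_exp_neg_mul_sq hb).const_mul (A * Cst)
  have h2 := (integrable_id_mul_exp_neg_mul_sq hb).const_mul (B * Cst)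
  have h3 := (integrable_sq_mul_exp_neg_mul_sq hb).const_mul (C * Cst)
  have hshift : ∫ x : ℝ, (A + B * (x - μ) + C * (x - μ) ^ 2) * gaussianPDFReal μ ⟨v, hv.le⟩ x
      = ∫ y : ℝ, (A + B * y + C * y ^ 2) * (Cst * rexp (-b * y ^ 2)) := by
    rw [← integral_add_right_eq_self
      (fun x : ℝ => (A + B * (x - μ) + C * (x - μ) ^ 2) * gaussianPDFReal μ ⟨v, hv.le⟩ x) μ]
    congr 1
    funext y
    rw [gaussianPDFReal_eq hv]
    simp only [add_sub_cancel_right]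
    rfl
  rw [hshift]
  have hsplit : (fun y : ℝ => (A + B * y + C * y ^ 2) * (Cst * rexp (-b * y ^ 2)))
      = fun y => (A * Cst) * rexp (-b * y ^ 2)
        + ((B * Cst) * (y * rexp (-b * y ^ 2)) + (C * Cst) * (y ^ 2 * rexp (-b * y ^ 2))) := by
    funext y; ring
  have h23 : Integrable (fun y : ℝ => B * Cst * (y * rexp (-b * y ^ 2))
      + C * Cst * (y ^ 2 * rexp (-b * y ^ 2))) volume := h2.add h3
  rw [hsplit]
  rw [integral_add h1 h23]
  rw [integral_add h2 h3]
  rw [integral_const_mul, integral_const_mul, integral_const_mul,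
    integral_gaussian, integral_id_mul_exp_neg_mul_sq hb, integral_sq_mul_exp_neg_mul_sq hb]
  have hπb : π / b = 2 * π * v := by
    rw [hbdef]
    field_simp
  have hCst : Cst * Real.sqrt (2 * π * v) = 1 := inv_mul_cancel₀ (by positivity)
  have hbinv : (2 * b)⁻¹ = v := by
    rw [hbdef]
    field_simp
  rw [hπb, div_eq_mul_inv, hbinv]
  linear_combination (A + C * v) * hCst
end quadratic

end helpers

/-- Kullback–Leibler divergence between two measures, valued in `ℝ≥0∞`:
`∫ log (dμ/dν) dμ` if `μ ≪ ν` and the log-likelihood ratio is `μ`-integrable, `∞` otherwise. -/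
noncomputable def klDiv {α : Type*} [MeasurableSpace α] (μ ν : Measure α) : ENNReal :=
  if μ ≪ ν ∧ Integrable (llr μ ν) μ then ENNReal.ofReal (∫ x, llr μ ν x ∂μ) else ⊤

/-- The Kullback–Leibler divergence between two Gaussian measures, with the equal-variance
special case: minimizing KL over the first mean amounts to minimizing the squared distance
of the means. -/
theorem klDiv_gaussianReal (μ₀ μ₁ v₀ v₁ : ℝ) (hv₀ : 0 < v₀) (hv₁ : 0 < v₁) :
    klDiv (gaussianReal μ₀ ⟨v₀, hv₀.le⟩) (gaussianReal μ₁ ⟨v₁, hv₁.le⟩)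
      = ENNReal.ofReal ((μ₀ - μ₁) ^ 2 / (2 * v₁)
          + (1 / 2) * (v₀ / v₁ - 1 - Real.log (v₀ / v₁)))
    ∧ (v₀ = v₁ →
        klDiv (gaussianReal μ₀ ⟨v₀, hv₀.le⟩) (gaussianReal μ₁ ⟨v₁, hv₁.le⟩)
          = ENNReal.ofReal ((μ₀ - μ₁) ^ 2 / (2 * v₁))) := by
  have hV₀ : (⟨v₀, hv₀.le⟩ : NNReal) ≠ 0 :=
    fun h => hv₀.ne' (congrArg (fun x : NNReal => (x : ℝ)) h)
  have hV₁ : (⟨v₁, hv₁.le⟩ : NNReal) ≠ 0 :=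
    fun h => hv₁.ne' (congrArg (fun x : NNReal => (x : ℝ)) h)
  set V₀ : ℝ≥0 := ⟨v₀, hv₀.le⟩
  set V₁ : ℝ≥0 := ⟨v₁, hv₁.le⟩
  set G₀ := gaussianReal μ₀ V₀ with hG₀
  set G₁ := gaussianReal μ₁ V₁ with hG₁
  have hac : G₀ ≪ G₁ :=
    (gaussianReal_absolutelyContinuous _ hV₀).trans (gaussianReal_absolutelyContinuous' _ hV₁)
  have hG₀vol : G₀ ≪ volume := gaussianReal_absolutelyContinuous _ hV₀
  set A : ℝ := Real.log (Real.sqrt (2*π*v₁)) - Real.log (Real.sqrt (2*π*v₀))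
      + (μ₀-μ₁)^2/(2*v₁) with hAdef
  set B : ℝ := (μ₀-μ₁)/v₁ with hBdef
  set C : ℝ := 1/(2*v₁) - 1/(2*v₀) with hCdef
  set L : ℝ → ℝ := fun x => Real.log (gaussianPDFReal μ₀ V₀ x)
      - Real.log (gaussianPDFReal μ₁ V₁ x) with hLdef
  -- quadratic form of L
  have hLquad : ∀ x, L x = A + B * (x - μ₀) + C * (x - μ₀) ^ 2 := by
    intro x
    have h0 : Real.log (gaussianPDFReal μ₀ V₀ x)
        = -Real.log (Real.sqrt (2*π*v₀)) + (-(x-μ₀)^2/(2*v₀)) := by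
      rw [gaussianPDFReal, Real.log_mul (by positivity) (Real.exp_ne_zero _),
        Real.log_inv, Real.log_exp]
      norm_num [V₀]
      rfl
    have h1 : Real.log (gaussianPDFReal μ₁ V₁ x)
        = -Real.log (Real.sqrt (2*π*v₁)) + (-(x-μ₁)^2/(2*v₁)) := by
      rw [gaussianPDFReal, Real.log_mul (by positivity) (Real.exp_ne_zero _),
        Real.log_inv, Real.log_exp]
      norm_num [V₁]
      rfl
    rw [hLdef]
    simp only [h0, h1, hAdef, hBdef, hCdef]
    field_simp
    ring
  -- a.e. identity for llr
  have hrn : G₀.rnDeriv G₁ =ᵐ[volume]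
      fun x => ENNReal.ofReal (gaussianPDFReal μ₀ V₀ x)
        / ENNReal.ofReal (gaussianPDFReal μ₁ V₁ x) := by
    have h1 := Measure.rnDeriv_mul_rnDeriv (κ := volume) hac
    have h2 := rnDeriv_gaussianReal μ₁ V₁
    have h3 := rnDeriv_gaussianReal μ₀ V₀
    simp only [gaussianPDF_def] at h2 h3
    filter_upwards [h1, h2, h3] with x hx1 hx2 hx3
    have hp1 : ENNReal.ofReal (gaussianPDFReal μ₁ V₁ x) ≠ 0 := by
      simp only [ne_eq, ENNReal.ofReal_eq_zero, not_le]
      exact gaussianPDFReal_pos _ _ _ hV₁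
    rw [ENNReal.eq_div_iff hp1 ENNReal.ofReal_ne_top]
    rw [← hx2, ← hx3, mul_comm]
    exact hx1
  have hllr : llr G₀ G₁ =ᵐ[G₀] L := by
    refine hG₀vol.ae_eq ?_
    filter_upwards [hrn] with x hx
    rw [llr, hx, ENNReal.toReal_div,
      ENNReal.toReal_ofReal (gaussianPDFReal_nonneg _ _ _),
      ENNReal.toReal_ofReal (gaussianPDFReal_nonneg _ _ _),
      Real.log_div (gaussianPDFReal_pos _ _ x hV₀).ne' (gaussianPDFReal_pos _ _ x hV₁).ne']
  -- withDensity representation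
  have hmeas : Measurable fun x => (gaussianPDFReal μ₀ V₀ x).toNNReal :=
    (measurable_gaussianPDFReal _ _).real_toNNReal
  have hwd : G₀ = volume.withDensity fun x => ((gaussianPDFReal μ₀ V₀ x).toNNReal : ℝ≥0∞) :=
    gaussianReal_of_var_ne_zero μ₀ hV₀
  have hsmul : (fun x => ((gaussianPDFReal μ₀ V₀ x).toNNReal : ℝ≥0) • L x)
      = fun x => (A + B * (x - μ₀) + C * (x - μ₀) ^ 2) * gaussianPDFReal μ₀ V₀ x := by
    funext x
    rw [NNReal.smul_def, Real.coe_toNNReal _ (gaussianPDFReal_nonneg _ _ _),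
      hLquad x]
    rw [smul_eq_mul, mul_comm]
  have hintL : Integrable L G₀ := by
    rw [hwd, integrable_withDensity_iff_integrable_smul hmeas]
    exact (gaussian_quadratic_integrable hv₀ μ₀ A B C).congr
      (Filter.Eventually.of_forall fun x => (congrFun hsmul x).symm)
  have hintllr : Integrable (llr G₀ G₁) G₀ := hintL.congr hllr.symm
  have hI : ∫ x, llr G₀ G₁ x ∂G₀ = A + C * v₀ := by
    rw [integral_congr_ae hllr, hwd, integral_withDensity_eq_integral_smul hmeas]
    rw [show (fun x => ((gaussianPDFReal μ₀ V₀ x).toNNReal : ℝ≥0) • L x)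
        = fun x => (A + B * (x - μ₀) + C * (x - μ₀) ^ 2) * gaussianPDFReal μ₀ V₀ x
      from hsmul]
    exact gaussian_quadratic_integral hv₀ μ₀ A B C
  have hA : Real.log (Real.sqrt (2*π*v₁)) - Real.log (Real.sqrt (2*π*v₀))
      = -(1/2) * Real.log (v₀/v₁) := by
    rw [Real.log_sqrt (by positivity), Real.log_sqrt (by positivity),
      Real.log_div hv₀.ne' hv₁.ne', Real.log_mul (by positivity) hv₁.ne',
      Real.log_mul (by positivity) hv₀.ne']
    ring
  have hfinal : A + C * v₀ = (μ₀ - μ₁) ^ 2 / (2 * v₁)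
      + (1 / 2) * (v₀ / v₁ - 1 - Real.log (v₀ / v₁)) := by
    rw [hAdef, hCdef, hA]
    field_simp
    ring
  have key : klDiv G₀ G₁ = ENNReal.ofReal ((μ₀ - μ₁) ^ 2 / (2 * v₁)
      + (1 / 2) * (v₀ / v₁ - 1 - Real.log (v₀ / v₁))) := by
    rw [klDiv, if_pos ⟨hac, hintllr⟩, hI, hfinal]
  refine ⟨key, fun h => ?_⟩
  rw [key]
  congr 1
  rw [h, div_self hv₁.ne', Real.log_one]
  ring
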